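/- arXiv:2501.14349 — 7 statements merged into one kernel-verified Lean document; each statement's English description precedes it below -/
import Mathlib

section
/- For all real x ≥ −1, ln(1 − x) ≤ −x − x²/4. -/
theorem log_one_sub_le (x : ℝ) (h1 : -1 ≤ x) (h2 : x < 1) :
    Real.log (1 - x) ≤ -x - x ^ 2 / 4 := by
  have hpos : (0:ℝ) < 1 - x := by linarith
  rcases le_or_gt x 0 with hx | hx
  · -- x ≤ 0: use 1 + t + t^2/2 ≤ exp t with t = -x - x^2/4 ≥ 0
    have htnn : 0 ≤ -x - x ^ 2 / 4 := by
      nlinarith [mul_nonneg (neg_nonneg.mpr hx) (by linarith : (0:ℝ) ≤ x + 4)]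
    have hq := Real.quadratic_le_exp_of_nonneg htnn
    have hle : 1 - x ≤ Real.exp (-x - x ^ 2 / 4) := by
      nlinarith [sq_nonneg x, sq_nonneg (x + 1), sq_nonneg (x * (x + 1))]
    calc Real.log (1 - x) ≤ Real.log (Real.exp (-x - x ^ 2 / 4)) :=
          Real.log_le_log hpos hle
      _ = -x - x ^ 2 / 4 := Real.log_exp _
  · -- 0 < x: log(1-x) = 2 log √(1-x) ≤ 2(√(1-x) - 1)
    set s := Real.sqrt (1 - x) with hs
    have hsnn : 0 ≤ s := Real.sqrt_nonneg _
    have hs2 : s ^ 2 = 1 - x := Real.sq_sqrt hpos.le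
    have hspos : 0 < s := Real.sqrt_pos.mpr hpos
    have hlog : Real.log (1 - x) = 2 * Real.log s := by
      rw [hs, Real.log_sqrt hpos.le]; ring
    have hls : Real.log s ≤ s - 1 := Real.log_le_sub_one_of_pos hspos
    have hs1 : s ≤ 1 := by nlinarith
    rw [hlog]
    nlinarith [sq_nonneg (1 - s), sq_nonneg ((1-s)*(1+s)), mul_nonneg (sq_nonneg (1-s)) hsnn]
end

section
/- Let X ⊆ ℝⁿ be nonempty compact, x ∈ X arbitrary (possibly suboptimal), c*, ĉ ∈ ℝⁿ, and x̂ ∈ argmax_{y ∈ X} ⟨ĉ, y⟩. Define ℓ(c*) = max_{y ∈ X} ⟨c*, y⟩ − ⟨c*, x⟩. Suppose ⟨c − c', y − y'⟩ ≤ B for all c, c' ∈ Θ, y, y' ∈ X, where c*, ĉ ∈ Θ. Then ⟨ĉ − c*, x̂ − x⟩² ≤ B·⟨ĉ − c*, x̂ − x⟩ + 2B·ℓ(c*). -/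
open scoped RealInnerProductSpace

/-- Inequality (7) in Theorem 4.1: self-bounding of the squared instantaneous surrogate
regret under possibly suboptimal feedback, with correction `2·B·ℓ(c*)` where
`ℓ(c*) = max_{y ∈ X} ⟪c*, y⟫ - ⟪c*, x⟫` is the suboptimality loss. -/
theorem instantaneous_regret_suboptimal {n : ℕ}
    (Θ X : Set (EuclideanSpace ℝ (Fin n))) (hne : X.Nonempty) (hcomp : IsCompact X)
    (B : ℝ) (hB : 0 < B)
    (cstar chat : EuclideanSpace ℝ (Fin n)) (hcstar : cstar ∈ Θ) (hchat : chat ∈ Θ)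
    (x xhat : EuclideanSpace ℝ (Fin n)) (hx : x ∈ X) (hxhat : xhat ∈ X)
    (hoptxhat : ∀ y ∈ X, ⟪chat, y⟫ ≤ ⟪chat, xhat⟫)
    (hbound : ∀ c ∈ Θ, ∀ c' ∈ Θ, ∀ y ∈ X, ∀ y' ∈ X, ⟪c - c', y - y'⟫ ≤ B) :
    ⟪chat - cstar, xhat - x⟫ ^ 2 ≤
      B * ⟪chat - cstar, xhat - x⟫ +
        2 * B * (sSup ((fun y => ⟪cstar, y⟫) '' X) - ⟪cstar, x⟫) := by
  set g : ℝ := ⟪chat - cstar, xhat - x⟫ with hg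
  set S : ℝ := sSup ((fun y => ⟪cstar, y⟫) '' X) with hS
  have hcont : Continuous fun y : EuclideanSpace ℝ (Fin n) => ⟪cstar, y⟫ :=
    continuous_const.inner continuous_id
  have hbdd : BddAbove ((fun y => ⟪cstar, y⟫) '' X) :=
    (hcomp.image hcont).bddAbove
  have hxS : ⟪cstar, x⟫ ≤ S := le_csSup hbdd ⟨x, hx, rfl⟩
  have hxhatS : ⟪cstar, xhat⟫ ≤ S := le_csSup hbdd ⟨xhat, hxhat, rfl⟩
  have h2 : g ≤ B := hbound chat hchat cstar hcstar xhat hxhat x hx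
  have h3 : -g ≤ B := by
    have := hbound cstar hcstar chat hchat xhat hxhat x hx
    have he : ⟪cstar - chat, xhat - x⟫ = -g := by
      rw [hg, ← inner_neg_left, neg_sub]
    linarith [he ▸ this]
  have hopt : (0:ℝ) ≤ ⟪chat, xhat - x⟫ := by
    have := hoptxhat x hx
    rw [inner_sub_right]; linarith
  have h1 : -(S - ⟪cstar, x⟫) ≤ g := by
    have he : g = ⟪chat, xhat - x⟫ - (⟪cstar, xhat⟫ - ⟪cstar, x⟫) := by
      simp only [hg, inner_sub_left, inner_sub_right]; ring
    linarith
  have hl0 : (0:ℝ) ≤ S - ⟪cstar, x⟫ := by linarith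
  nlinarith [mul_nonneg (by linarith : (0:ℝ) ≤ g + (S - ⟪cstar, x⟫)) (by linarith : (0:ℝ) ≤ B - g),
    mul_nonneg hl0 (by linarith : (0:ℝ) ≤ B + g)]
end

section
/- Fix T ≥ n ≥ 1 and B > 0. For t = 1,…,n let Xₜ = { x ∈ ℝⁿ : |x(t)| ≤ (B/4)·√n, x(i) = 0 for i ≠ t }. Let c* ∈ {−1/√n, +1/√n}ⁿ be a uniformly random sign vector and xₜ ∈ argmax_{x ∈ Xₜ} ⟨c*, x⟩. If for each t the vector x̂ₜ ∈ Xₜ is independent of the coordinate c*(t), then E[⟨c*, xₜ − x̂ₜ⟩] = B/4 for each t = 1,…,n, and hence E[Σ_{t=1}^{n} ⟨c*, xₜ − x̂ₜ⟩] = B·n/4. -/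
open scoped RealInnerProductSpace

/-- Core computation in the Ω(n) regret lower bound (Theorem 5.1): on the axis-segment
instance with a uniformly random sign vector `c*`, any prediction `x̂ₜ` whose value is
independent of the coordinate `c*(t)` incurs expected instantaneous regret exactly `B/4`,
hence total expected regret `B·n/4` over the first `n` rounds. -/
theorem lower_bound_core (n T : ℕ) (hn : 1 ≤ n) (hT : n ≤ T) (B : ℝ) (hB : 0 < B)
    (cstar : (Fin n → Bool) → EuclideanSpace ℝ (Fin n))
    (hcstar : ∀ σ i, cstar σ i =
      if σ i then 1 / Real.sqrt n else -(1 / Real.sqrt n))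
    (X : Fin n → Set (EuclideanSpace ℝ (Fin n)))
    (hX : ∀ t, X t = {x | |x t| ≤ (B / 4) * Real.sqrt n ∧ ∀ i, i ≠ t → x i = 0})
    (xopt xhat : Fin n → (Fin n → Bool) → EuclideanSpace ℝ (Fin n))
    (hxopt_mem : ∀ t σ, xopt t σ ∈ X t)
    (hxopt_opt : ∀ t σ, ∀ y ∈ X t, ⟪cstar σ, y⟫ ≤ ⟪cstar σ, xopt t σ⟫)
    (hxhat_mem : ∀ t σ, xhat t σ ∈ X t)
    (hindep : ∀ t (σ σ' : Fin n → Bool), (∀ i, i ≠ t → σ i = σ' i) → xhat t σ = xhat t σ') :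
    (∀ t : Fin n,
        (∑ σ : Fin n → Bool, ⟪cstar σ, xopt t σ - xhat t σ⟫) / 2 ^ n = B / 4) ∧
      (∑ t : Fin n,
        (∑ σ : Fin n → Bool, ⟪cstar σ, xopt t σ - xhat t σ⟫) / 2 ^ n) = B * n / 4 := by
  have hnpos : (0:ℝ) < n := by exact_mod_cast hn
  have hs : (0:ℝ) < Real.sqrt n := Real.sqrt_pos.mpr hnpos
  have hcabs : ∀ σ (i : Fin n), |cstar σ i| = 1 / Real.sqrt n := by
    intro σ i
    rw [hcstar]
    rcases σ i with _ | _ <;> simp [abs_of_pos, hs, le_of_lt hs, abs_of_nonneg]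
  -- inner product with a vector supported on coordinate t
  have hinner : ∀ (σ) (t : Fin n) (y : EuclideanSpace ℝ (Fin n)), y ∈ X t →
      ⟪cstar σ, y⟫ = cstar σ t * y t := by
    intro σ t y hy
    rw [hX] at hy
    rw [PiLp.inner_apply]
    rw [Finset.sum_eq_single t]
    · simp [RCLike.inner_apply, mul_comm]
    · intro i _ hi
      simp [hy.2 i hi]
    · simp
  -- value of the optimum
  have hopt : ∀ (t : Fin n) σ, ⟪cstar σ, xopt t σ⟫ = B / 4 := by
    intro t σ
    have hmem := hxopt_mem t σ
    have hle : ⟪cstar σ, xopt t σ⟫ ≤ B / 4 := by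
      rw [hinner σ t _ hmem]
      calc cstar σ t * xopt t σ t ≤ |cstar σ t * xopt t σ t| := le_abs_self _
        _ = |cstar σ t| * |xopt t σ t| := abs_mul _ _
        _ ≤ (1 / Real.sqrt n) * ((B / 4) * Real.sqrt n) := by
            rw [hcabs]
            apply mul_le_mul_of_nonneg_left _ (by positivity)
            have := hxopt_mem t σ; rw [hX] at this; exact this.1
        _ = B / 4 := by field_simp
    have hge : B / 4 ≤ ⟪cstar σ, xopt t σ⟫ := by
      set y : EuclideanSpace ℝ (Fin n) :=
        WithLp.toLp 2 (fun i => if i = t then (if σ t then 1 else -1) * ((B / 4) * Real.sqrt n) else 0) with hy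
      have hymem : y ∈ X t := by
        rw [hX]
        constructor
        · simp only [hy, PiLp.toLp_apply, if_pos rfl, if_true, Set.mem_setOf_eq]
          rw [abs_mul]
          have h1 : |(if σ t then (1:ℝ) else -1)| = 1 := by
            rcases σ t with _ | _ <;> norm_num
          rw [h1, one_mul, abs_of_nonneg (by positivity)]
        · intro i hi; simp [hy, hi]
      have := hxopt_opt t σ y hymem
      have hyval : ⟪cstar σ, y⟫ = B / 4 := by
        rw [hinner σ t y hymem, hcstar]
        simp only [hy, PiLp.toLp_apply, if_pos rfl]
        rcases σ t with _ | _ <;> simp <;> field_simp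
      linarith
    linarith
  -- the xhat sum vanishes
  have hhat : ∀ t : Fin n, (∑ σ : Fin n → Bool, ⟪cstar σ, xhat t σ⟫) = 0 := by
    intro t
    apply Finset.sum_ninvolution (fun σ => Function.update σ t (!σ t))
    · intro σ
      have hx : xhat t (Function.update σ t (!σ t)) = xhat t σ := by
        apply hindep
        intro i hi
        simp [Function.update_of_ne hi]
      rw [hinner σ t _ (hxhat_mem t σ), hinner _ t _ (hxhat_mem t _), hx]
      have : cstar (Function.update σ t (!σ t)) t = -(cstar σ t) := by
        rw [hcstar, hcstar, Function.update_self]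
        rcases σ t with _ | _ <;> simp
      rw [this]; ring
    · intro σ _ h
      have := congrFun h t
      simp at this
    · intro σ; exact Finset.mem_univ _
    · intro σ
      funext i
      by_cases hi : i = t
      · subst hi; simp
      · simp [Function.update_of_ne hi]
  have key : ∀ t : Fin n,
      (∑ σ : Fin n → Bool, ⟪cstar σ, xopt t σ - xhat t σ⟫) / 2 ^ n = B / 4 := by
    intro t
    have : (∑ σ : Fin n → Bool, ⟪cstar σ, xopt t σ - xhat t σ⟫)
        = ∑ σ : Fin n → Bool, (⟪cstar σ, xopt t σ⟫ - ⟪cstar σ, xhat t σ⟫) := by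
      apply Finset.sum_congr rfl
      intro σ _
      rw [inner_sub_right]
    rw [this, Finset.sum_sub_distrib, hhat, sub_zero]
    have : (∑ σ : Fin n → Bool, ⟪cstar σ, xopt t σ⟫) = (2:ℝ) ^ n * (B / 4) := by
      rw [Finset.sum_congr rfl (fun σ _ => hopt t σ), Finset.sum_const]
      simp [Fintype.card_fun]
      try ring
    rw [this]
    field_simp
    try ring
  refine ⟨key, ?_⟩
  rw [Finset.sum_congr rfl (fun t _ => key t), Finset.sum_const]
  simp
  try ring
end

section
/- Fix η > 0, H > 0 with η ≤ 1/(5H), and vectors w₀, g ∈ ℝⁿ with |⟨w − w', g⟩| ≤ H for all w, w' in a convex set W containing w₀. Define f(w) = −η⟨w₀ − w, g⟩ + η²⟨w₀ − w, g⟩². Then ∇f(w)·∇f(w)ᵀ ⪯ ((1 + 2ηH)²/2)·∇²f(w) for all w ∈ W; consequently f is α-exp-concave on W with α = 2/(1 + 2ηH)². -/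
open scoped RealInnerProductSpace

/-- The 1-D surrogate `t ↦ exp(α·η·t − α·η²·t²)` is concave on `[-H, H]`
when `α = 2/(1+2ηH)²`. -/
lemma phi_concave (η H : ℝ) (hη : 0 < η) (hH : 0 < H) :
    ConcaveOn ℝ (Set.Icc (-H) H)
      (fun t : ℝ => Real.exp (-(2 / (1 + 2 * η * H) ^ 2) * (-η * t + η ^ 2 * t ^ 2))) := by
  set α : ℝ := 2 / (1 + 2 * η * H) ^ 2 with hα
  have hden : (0:ℝ) < (1 + 2 * η * H) ^ 2 := by positivity
  have hαpos : 0 < α := by positivity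
  set ψ : ℝ → ℝ := fun t => -α * (-η * t + η ^ 2 * t ^ 2) with hψ
  set ψ' : ℝ → ℝ := fun t => α * η - 2 * α * η ^ 2 * t with hψ'
  have hψd : ∀ t : ℝ, HasDerivAt ψ (ψ' t) t := by
    intro t
    have : HasDerivAt (fun t : ℝ => -α * (-η * t + η ^ 2 * t ^ 2))
        (-α * (-η * 1 + η ^ 2 * (2 * t))) t := by
      apply HasDerivAt.const_mul
      exact ((hasDerivAt_id t).const_mul (-η)).add
        (((hasDerivAt_id t).pow 2).const_mul (η ^ 2) |>.congr_deriv (by simp only [id_eq]; ring))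
    simpa [ψ, ψ'] using this.congr_deriv (by ring)
  set φ : ℝ → ℝ := fun t => Real.exp (ψ t) with hφ
  set φ' : ℝ → ℝ := fun t => ψ' t * Real.exp (ψ t) with hφ'
  have hφd : ∀ t : ℝ, HasDerivAt φ (φ' t) t := by
    intro t
    simpa [φ, φ', mul_comm] using (hψd t).exp
  set φ'' : ℝ → ℝ := fun t => ((ψ' t) ^ 2 - 2 * α * η ^ 2) * Real.exp (ψ t) with hφ''
  have hφdd : ∀ t : ℝ, HasDerivAt φ' (φ'' t) t := by
    intro t
    have h1 : HasDerivAt ψ' (-(2 * α * η ^ 2)) t := by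
      have := ((hasDerivAt_id t).const_mul (2 * α * η ^ 2)).const_sub (α * η)
      simpa [ψ'] using this.congr_deriv (by ring)
    have := h1.mul (hψd t).exp
    refine this.congr_deriv ?_
    simp only [φ'', ψ']
    ring
  refine concaveOn_of_hasDerivWithinAt2_nonpos (f' := φ') (f'' := φ'')
    (convex_Icc _ _) ?_ ?_ ?_ ?_
  · exact fun t _ => (hφd t).continuousAt.continuousWithinAt
  · exact fun t _ => (hφd t).hasDerivWithinAt
  · exact fun t _ => (hφdd t).hasDerivWithinAt
  · intro t ht
    rw [interior_Icc] at ht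
    have hta : |t| ≤ H := abs_le.mpr ⟨ht.1.le, ht.2.le⟩
    have key : (ψ' t) ^ 2 ≤ 2 * α * η ^ 2 := by
      have h1 : (1 - 2 * η * t) ^ 2 ≤ (1 + 2 * η * H) ^ 2 := by
        have h := abs_le.mp hta
        have h2 : t ^ 2 ≤ H ^ 2 := sq_le_sq' h.1 h.2
        have h3 : η ^ 2 * t ^ 2 ≤ η ^ 2 * H ^ 2 :=
          mul_le_mul_of_nonneg_left h2 (sq_nonneg η)
        have h4 : η * (-H) ≤ η * t := mul_le_mul_of_nonneg_left h.1 hη.le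
        nlinarith [h3, h4]
      have hψ't : ψ' t = α * η * (1 - 2 * η * t) := by simp only [ψ']; ring
      rw [hψ't]
      have hα2 : α * (1 + 2 * η * H) ^ 2 = 2 := by
        rw [hα]; exact div_mul_cancel₀ 2 hden.ne'
      nlinarith [mul_le_mul_of_nonneg_left h1 (le_of_lt hαpos), sq_nonneg (α * η)]
    have : (ψ' t) ^ 2 - 2 * α * η ^ 2 ≤ 0 := by linarith
    exact mul_nonpos_of_nonpos_of_nonneg this (Real.exp_pos _).le

/-- Exp-concavity of the MetaGrad surrogate loss
`f(w) = −η⟪w₀ − w, g⟫ + η²⟪w₀ − w, g⟫²`: the outer product of the gradient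
`∇f(w) = η(1 − 2η⟪g, w₀ − w⟫)g` is dominated by `((1 + 2ηH)²/2)` times the Hessian
`∇²f(w) = 2η²·g·gᵀ`, and consequently `f` is `2/(1 + 2ηH)²`-exp-concave on `W`. -/
theorem surrogate_loss_expConcave {n : ℕ} (η H : ℝ) (hη : 0 < η) (hH : 0 < H)
    (hηH : η ≤ 1 / (5 * H))
    (W : Set (EuclideanSpace ℝ (Fin n))) (hW : Convex ℝ W)
    (w₀ g : EuclideanSpace ℝ (Fin n)) (hw₀ : w₀ ∈ W)
    (hbound : ∀ w ∈ W, ∀ w' ∈ W, |⟪w - w', g⟫| ≤ H) :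
    (∀ w ∈ W, ∀ v : EuclideanSpace ℝ (Fin n),
        (η * (1 - 2 * η * ⟪g, w₀ - w⟫) * ⟪g, v⟫) ^ 2 ≤
          ((1 + 2 * η * H) ^ 2 / 2) * (2 * η ^ 2 * ⟪g, v⟫ ^ 2)) ∧
      ConcaveOn ℝ W (fun w => Real.exp (-(2 / (1 + 2 * η * H) ^ 2) *
        (-η * ⟪w₀ - w, g⟫ + η ^ 2 * ⟪w₀ - w, g⟫ ^ 2))) := by
  have habs : ∀ w ∈ W, |⟪g, w₀ - w⟫| ≤ H := by
    intro w hw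
    rw [real_inner_comm]
    exact hbound w₀ hw₀ w hw
  constructor
  · intro w hw v
    set a := ⟪g, w₀ - w⟫
    set c := ⟪g, v⟫
    have ha := abs_le.mp (habs w hw)
    have h1 : (1 - 2 * η * a) ^ 2 ≤ (1 + 2 * η * H) ^ 2 := by
      have h2 : a ^ 2 ≤ H ^ 2 := sq_le_sq' ha.1 ha.2
      have h3 : η ^ 2 * a ^ 2 ≤ η ^ 2 * H ^ 2 :=
        mul_le_mul_of_nonneg_left h2 (sq_nonneg η)
      have h4 : η * (-H) ≤ η * a := mul_le_mul_of_nonneg_left ha.1 hη.le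
      nlinarith [h3, h4]
    nlinarith [mul_le_mul_of_nonneg_right h1 (sq_nonneg (η * c)), sq_nonneg (η * c)]
  · have hphi := phi_concave η H hη hH
    refine ⟨hW, ?_⟩
    intro x hx y hy a b ha hb hab
    have hmem : ∀ z ∈ W, ⟪w₀ - z, g⟫ ∈ Set.Icc (-H) H := by
      intro z hz
      have h := habs z hz
      rw [real_inner_comm] at h
      exact Set.mem_Icc.mpr (abs_le.mp h)
    have hL : ⟪w₀ - (a • x + b • y), g⟫ = a * ⟪w₀ - x, g⟫ + b * ⟪w₀ - y, g⟫ := by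
      have hsplit : a • (w₀ - x) + b • (w₀ - y) = w₀ - (a • x + b • y) := by
        have h5 : a • (w₀ - x) + b • (w₀ - y) = (a + b) • w₀ - (a • x + b • y) := by
          rw [smul_sub, smul_sub, add_smul]; abel
        rw [h5, hab, one_smul]
      rw [← hsplit, inner_add_left, real_inner_smul_left, real_inner_smul_left]
    have := hphi.2 (hmem x hx) (hmem y hy) ha hb hab
    simpa [hL, smul_eq_mul] using this
end

section
/- Let g₁,…,g_T ∈ ℝⁿ with ‖gₜ‖₂ ≤ λ for all t, ε > 0, A₀ = ε·Iₙ, and Aₜ = A_{t−1} + gₜgₜᵀ. Then Σ_{t=1}^{T} gₜᵀ Aₜ⁻¹ gₜ ≤ ln( det(A_T) / det(A₀) ) ≤ n·ln(T·λ²/ε + 1). -/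
open Matrix Finset Real

namespace EllipticalAux

variable {n : ℕ}

lemma vecMulVec_mulVec' (w v x : Fin n → ℝ) :
    Matrix.vecMulVec w v *ᵥ x = (v ⬝ᵥ x) • w := by
  ext i
  simp only [Matrix.mulVec, dotProduct, Matrix.vecMulVec_apply, Pi.smul_apply,
    smul_eq_mul, Finset.sum_mul]
  exact Finset.sum_congr rfl (fun j _ => by ring)

lemma posSemidef_vecMulVec (v : Fin n → ℝ) : (Matrix.vecMulVec v v).PosSemidef := by
  refine Matrix.PosSemidef.of_dotProduct_mulVec_nonneg ?_ ?_
  · ext i j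
    simp [Matrix.conjTranspose_apply, Matrix.vecMulVec_apply, mul_comm]
  · intro x
    rw [vecMulVec_mulVec']
    simp only [star_trivial, dotProduct_smul, smul_eq_mul]
    rw [dotProduct_comm]
    exact mul_self_nonneg _

lemma posDef_smul_one {ε : ℝ} (hε : 0 < ε) :
    (ε • (1 : Matrix (Fin n) (Fin n) ℝ)).PosDef := by
  refine Matrix.PosDef.of_dotProduct_mulVec_pos ?_ (fun x hx => ?_)
  · ext i j
    simp [Matrix.conjTranspose_apply, Matrix.one_apply]
    split <;> simp_all [eq_comm]
  · simp only [Matrix.smul_mulVec, Matrix.one_mulVec, dotProduct_smul,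
      star_trivial, smul_eq_mul]
    have hxx : 0 < x ⬝ᵥ x := by
      obtain ⟨i, hi⟩ := Function.ne_iff.mp hx
      rw [dotProduct]
      exact Finset.sum_pos' (fun j _ => mul_self_nonneg _)
        ⟨i, Finset.mem_univ i, mul_self_pos.mpr hi⟩
    exact mul_pos hε hxx

lemma det_add_vecMulVec (B : Matrix (Fin n) (Fin n) ℝ) (hB : IsUnit B.det) (v : Fin n → ℝ) :
    (B + Matrix.vecMulVec v v).det = B.det * (1 + v ⬝ᵥ (B⁻¹ *ᵥ v)) := by
  rw [Matrix.vecMulVec_eq Unit, Matrix.det_add_replicateCol_mul_replicateRow hB]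
  congr 1
  rw [Matrix.det_unique]
  simp only [Matrix.add_apply, Matrix.one_apply_eq, Matrix.mul_apply, Matrix.replicateRow_apply,
    Matrix.replicateCol_apply, dotProduct, Matrix.mulVec]
  simp only [Finset.sum_mul, Finset.mul_sum]
  rw [Finset.sum_comm]
  ring_nf

lemma dot_inv_add_vecMulVec (B : Matrix (Fin n) (Fin n) ℝ) (hB : B.PosDef) (v : Fin n → ℝ) :
    v ⬝ᵥ ((B + Matrix.vecMulVec v v)⁻¹ *ᵥ v)
      = 1 - (1 + v ⬝ᵥ (B⁻¹ *ᵥ v))⁻¹ := by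
  set q := v ⬝ᵥ (B⁻¹ *ᵥ v) with hqdef
  have hq : 0 ≤ q := by simpa using hB.inv.posSemidef.dotProduct_mulVec_nonneg v
  have h1q : (0:ℝ) < 1 + q := by linarith
  have hB' : (B + Matrix.vecMulVec v v).PosDef :=
    hB.add_posSemidef (posSemidef_vecMulVec v)
  set B' := B + Matrix.vecMulVec v v with hB'def
  have vmv : Matrix.vecMulVec v v *ᵥ (B⁻¹ *ᵥ v) = q • v := by
    rw [vecMulVec_mulVec', hqdef]
  have key : B' *ᵥ ((1 + q)⁻¹ • (B⁻¹ *ᵥ v)) = v := by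
    rw [Matrix.mulVec_smul, hB'def, Matrix.add_mulVec, Matrix.mulVec_mulVec,
      Matrix.mul_nonsing_inv _ hB.det_pos.ne'.isUnit, Matrix.one_mulVec, vmv]
    rw [show v + q • v = (1 + q) • v by module, smul_smul,
      inv_mul_cancel₀ h1q.ne', one_smul]
  have h2 : B'⁻¹ *ᵥ v = (1 + q)⁻¹ • (B⁻¹ *ᵥ v) := by
    conv_lhs => rw [← key]
    rw [Matrix.mulVec_mulVec, Matrix.nonsing_inv_mul _ hB'.det_pos.ne'.isUnit,
      Matrix.one_mulVec]
  rw [h2, dotProduct_smul, smul_eq_mul, ← hqdef]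
  field_simp
  ring

end EllipticalAux

/-- The elliptical potential lemma used in the ONS regret analysis. Here `A (t+1)`
plays the role of `Aₜ = A_{t−1} + gₜgₜᵀ` in the paper, and `∑ᵢ (g t i)² ≤ λ²`
expresses `‖gₜ‖₂ ≤ λ`. -/
theorem elliptical_potential (n T : ℕ) (ε lam : ℝ) (hε : 0 < ε) (hlam : 0 ≤ lam)
    (g : ℕ → Fin n → ℝ) (hg : ∀ t < T, ∑ i, (g t i) ^ 2 ≤ lam ^ 2)
    (A : ℕ → Matrix (Fin n) (Fin n) ℝ)
    (hA0 : A 0 = ε • (1 : Matrix (Fin n) (Fin n) ℝ))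
    (hAt : ∀ t < T, A (t + 1) = A t + Matrix.vecMulVec (g t) (g t)) :
    (∑ t ∈ Finset.range T, dotProduct (g t) ((A (t + 1))⁻¹.mulVec (g t))) ≤
        Real.log ((A T).det / (A 0).det) ∧
      Real.log ((A T).det / (A 0).det) ≤ n * Real.log (T * lam ^ 2 / ε + 1) := by
  have hPD : ∀ t, t ≤ T → (A t).PosDef := by
    intro t
    induction t with
    | zero => intro _; rw [hA0]; exact EllipticalAux.posDef_smul_one hε
    | succ t ih =>
      intro h
      rw [hAt t (by omega)]
      exact (ih (by omega)).add_posSemidef (EllipticalAux.posSemidef_vecMulVec _)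
  -- Part 1
  have step : ∀ t < T, dotProduct (g t) ((A (t + 1))⁻¹.mulVec (g t))
      ≤ Real.log (A (t + 1)).det - Real.log (A t).det := by
    intro t ht
    have hPt := hPD t (by omega)
    set q := (g t) ⬝ᵥ ((A t)⁻¹ *ᵥ (g t)) with hq
    have hq0 : 0 ≤ q := by simpa using hPt.inv.posSemidef.dotProduct_mulVec_nonneg (g t)
    have h1q : (0:ℝ) < 1 + q := by linarith
    have hdet : (A (t + 1)).det = (A t).det * (1 + q) := by
      rw [hAt t ht]
      exact EllipticalAux.det_add_vecMulVec _ hPt.det_pos.ne'.isUnit _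
    have hdot : dotProduct (g t) ((A (t + 1))⁻¹.mulVec (g t)) = 1 - (1 + q)⁻¹ := by
      rw [hAt t ht]
      exact EllipticalAux.dot_inv_add_vecMulVec _ hPt _
    rw [hdot, hdet, Real.log_mul hPt.det_pos.ne' h1q.ne', add_sub_cancel_left]
    exact Real.one_sub_inv_le_log_of_pos h1q
  have hlogdiv : Real.log ((A T).det / (A 0).det)
      = Real.log (A T).det - Real.log (A 0).det :=
    Real.log_div (hPD T le_rfl).det_pos.ne' (hPD 0 (by omega)).det_pos.ne'
  have sum1 : (∑ t ∈ Finset.range T, dotProduct (g t) ((A (t + 1))⁻¹.mulVec (g t)))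
      ≤ Real.log (A T).det - Real.log (A 0).det := by
    calc (∑ t ∈ Finset.range T, dotProduct (g t) ((A (t + 1))⁻¹.mulVec (g t)))
        ≤ ∑ t ∈ Finset.range T, (Real.log (A (t + 1)).det - Real.log (A t).det) :=
          Finset.sum_le_sum (fun t ht => step t (Finset.mem_range.mp ht))
      _ = Real.log (A T).det - Real.log (A 0).det :=
          Finset.sum_range_sub (fun t => Real.log (A t).det) T
  refine ⟨hlogdiv ▸ sum1, ?_⟩
  -- Part 2
  set c : ℝ := T * lam ^ 2 + ε with hc
  have hc0 : 0 < c := by positivity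
  have quad : ∀ t, t ≤ T → ∀ x : Fin n → ℝ,
      x ⬝ᵥ (A t *ᵥ x) ≤ (t * lam ^ 2 + ε) * (x ⬝ᵥ x) := by
    intro t
    induction t with
    | zero =>
      intro _ x
      rw [hA0]
      simp only [Matrix.smul_mulVec, Matrix.one_mulVec, dotProduct_smul,
        smul_eq_mul, Nat.cast_zero]
      linarith [show ((0:ℝ) * lam ^ 2 + ε) * (x ⬝ᵥ x) = ε * (x ⬝ᵥ x) by ring]
    | succ t ih =>
      intro h x
      have hxx0 : 0 ≤ x ⬝ᵥ x := by
        rw [dotProduct]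
        exact Finset.sum_nonneg fun i _ => mul_self_nonneg _
      rw [hAt t (by omega), Matrix.add_mulVec, dotProduct_add,
        EllipticalAux.vecMulVec_mulVec', dotProduct_smul, smul_eq_mul]
      have hcs : (g t ⬝ᵥ x) * (x ⬝ᵥ g t) ≤ lam ^ 2 * (x ⬝ᵥ x) := by
        rw [dotProduct_comm x (g t), ← sq]
        have h1 : (g t ⬝ᵥ x) ^ 2 ≤ (∑ i, (g t i) ^ 2) * (∑ i, (x i) ^ 2) := by
          simpa [dotProduct] using
            Finset.sum_mul_sq_le_sq_mul_sq Finset.univ (g t) x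
        have hxx : (∑ i, (x i) ^ 2) = x ⬝ᵥ x := by
          simp [dotProduct, sq]
        calc (g t ⬝ᵥ x) ^ 2 ≤ (∑ i, (g t i) ^ 2) * (∑ i, (x i) ^ 2) := h1
          _ ≤ lam ^ 2 * (x ⬝ᵥ x) := by
              rw [hxx]
              exact mul_le_mul_of_nonneg_right (hg t (by omega)) hxx0
      have hih := ih (by omega) x
      push_cast
      nlinarith [hih, hcs]
  have hPT := hPD T le_rfl
  have hH := hPT.1
  have eig_le : ∀ i, hH.eigenvalues i ≤ c := by
    intro i
    have hv1 : ‖hH.eigenvectorBasis i‖ = 1 := hH.eigenvectorBasis.orthonormal.1 i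
    set v : Fin n → ℝ := ⇑(hH.eigenvectorBasis i) with hvdef
    have hvv : v ⬝ᵥ v = 1 := by
      have h1 : ‖hH.eigenvectorBasis i‖ ^ 2 = 1 := by rw [hv1]; norm_num
      rw [EuclideanSpace.norm_eq] at h1
      rw [Real.sq_sqrt (Finset.sum_nonneg fun j _ => sq_nonneg _)] at h1
      simpa [dotProduct, sq, Real.norm_eq_abs, sq_abs] using h1
    have heig : hH.eigenvalues i = v ⬝ᵥ (A T *ᵥ v) := by
      simpa [hvdef] using hH.eigenvalues_eq i
    have := quad T le_rfl v
    rw [hvv, mul_one] at this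
    rw [heig]
    exact this
  have eig_nonneg : ∀ i, 0 ≤ hH.eigenvalues i := hPT.posSemidef.eigenvalues_nonneg
  have hdetT : (A T).det = ∏ i, hH.eigenvalues i := by
    simpa using hH.det_eq_prod_eigenvalues
  have hdetT_le : (A T).det ≤ c ^ n := by
    rw [hdetT]
    calc (∏ i, hH.eigenvalues i) ≤ ∏ _i : Fin n, c :=
          Finset.prod_le_prod (fun i _ => eig_nonneg i) (fun i _ => eig_le i)
      _ = c ^ n := by simp
  have hdet0 : (A 0).det = ε ^ n := by
    rw [hA0, Matrix.det_smul, Matrix.det_one, mul_one]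
    simp
  rw [hdet0]
  have hcε : c / ε = T * lam ^ 2 / ε + 1 := by
    field_simp
    exact hc
  calc Real.log ((A T).det / ε ^ n) ≤ Real.log (c ^ n / ε ^ n) := by
        apply Real.log_le_log (div_pos (hPD T le_rfl).det_pos (by positivity))
        exact div_le_div_of_nonneg_right hdetT_le (by positivity) |>.trans_eq rfl
    _ = n * Real.log (T * lam ^ 2 / ε + 1) := by
        rw [← div_pow, Real.log_pow, hcε]
end

section
/- Let A be a symmetric positive definite n×n matrix, g ∈ ℝⁿ, and set B = A + g·gᵀ. Then gᵀ B⁻¹ g ≤ ln(det B) − ln(det A). -/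
open Matrix

lemma aux_vecMulVec_mulVec {n : ℕ} (a b x : Fin n → ℝ) :
    vecMulVec a b *ᵥ x = (b ⬝ᵥ x) • a := by
  ext i
  simp [mulVec, vecMulVec_apply, dotProduct, Finset.mul_sum, mul_comm, mul_assoc, mul_left_comm]

lemma aux_mul_vecMulVec {n : ℕ} (M : Matrix (Fin n) (Fin n) ℝ) (a b : Fin n → ℝ) :
    M * vecMulVec a b = vecMulVec (M *ᵥ a) b := by
  ext i j
  simp [mul_apply, vecMulVec_apply, mulVec, dotProduct, Finset.sum_mul, mul_assoc]

lemma aux_vecMulVec_mul {n : ℕ} (M : Matrix (Fin n) (Fin n) ℝ) (a b : Fin n → ℝ) :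
    vecMulVec a b * M = vecMulVec a (b ᵥ* M) := by
  ext i j
  simp [mul_apply, vecMulVec_apply, vecMul, dotProduct, Finset.mul_sum, mul_assoc]

lemma aux_det_congr {n : Type*} {R : Type*} [CommRing R] (D1 : DecidableEq n) (F1 : Fintype n)
    [D2 : DecidableEq n] [F2 : Fintype n] (A : Matrix n n R) :
    @Matrix.det n D1 F1 R _ A = @Matrix.det n D2 F2 R _ A := by
  congr!

lemma aux_one_apply_eq {m : Type*} (D : DecidableEq m) [Fintype m] (i : m) :
    (1 : Matrix m m ℝ) i i = 1 :=
  Matrix.one_apply_eq i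

lemma aux_posSemidef_vecMulVec {n : ℕ} (g : Fin n → ℝ) :
    (vecMulVec g g).PosSemidef := by
  rw [posSemidef_iff_dotProduct_mulVec]
  constructor
  · ext i j
    simp [conjTranspose_apply, vecMulVec_apply, mul_comm]
  · intro x
    rw [aux_vecMulVec_mulVec]
    simp only [dotProduct_smul, smul_eq_mul, star_trivial]
    have : x ⬝ᵥ g = g ⬝ᵥ x := dotProduct_comm x g
    rw [this]
    exact mul_self_nonneg _

/-- One-step inequality underlying the elliptical potential lemma:
for symmetric positive definite `A` and `B = A + g·gᵀ`,
`gᵀB⁻¹g ≤ ln det B − ln det A`. -/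
theorem one_step_elliptical_potential (n : ℕ) (A : Matrix (Fin n) (Fin n) ℝ)
    (hA : A.PosDef) (g : Fin n → ℝ) :
    dotProduct g ((A + Matrix.vecMulVec g g)⁻¹.mulVec g) ≤
      Real.log (A + Matrix.vecMulVec g g).det - Real.log A.det := by
  have hAdet : IsUnit A.det := isUnit_iff_ne_zero.mpr hA.det_pos.ne'
  set c : Fin n → ℝ := A⁻¹ *ᵥ g with hc
  set s : ℝ := g ⬝ᵥ c with hs
  have hs0 : 0 ≤ s := by
    have h := hA.inv.posSemidef.re_dotProduct_nonneg g
    simpa [hs, hc] using h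
  have h1s : (0:ℝ) < 1 + s := by linarith
  -- A⁻¹ is symmetric
  have hAinv_symm : A⁻¹ᵀ = A⁻¹ := by
    have := hA.isHermitian.inv
    simpa [Matrix.IsHermitian, conjTranspose_eq_transpose_of_trivial] using this.eq
  have hvm : g ᵥ* A⁻¹ = c := by
    rw [← Matrix.mulVec_transpose, hAinv_symm]
  have hAAinv : A * A⁻¹ = 1 := Matrix.mul_nonsing_inv A hAdet
  have hAinvA : A⁻¹ * A = 1 := Matrix.nonsing_inv_mul A hAdet
  -- determinant identity : det (A + ggᵀ) = det A * (1 + s)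
  have hdet : (A + vecMulVec g g).det = A.det * (1 + s) := by
    rw [vecMulVec_eq (Fin 1) g g, Matrix.det_add_replicateCol_mul_replicateRow hAdet g g]
    congr 1
    rw [aux_det_congr]
    refine (Matrix.det_eq_elem_of_subsingleton _ 0).trans ?_
    have hrc : (replicateRow (Fin 1) g * A⁻¹ * replicateCol (Fin 1) g) = replicateRow (Fin 1) (g ᵥ* A⁻¹) * replicateCol (Fin 1) g := by
      ext i j
      simp [mul_apply, replicateRow, replicateCol, vecMul, dotProduct, Finset.sum_mul, mul_assoc]
    rw [Matrix.add_apply, hrc, replicateRow_mul_replicateCol_apply, hvm, aux_one_apply_eq, hs, dotProduct_comm]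
  -- inverse of B via explicit right inverse
  set C : Matrix (Fin n) (Fin n) ℝ := A⁻¹ - (1 + s)⁻¹ • vecMulVec c c with hCdef
  have hcoef : (1 + s)⁻¹ + (1 + s)⁻¹ * s = 1 := by field_simp
  have hBC : (A + vecMulVec g g) * C = 1 := by
    have hAc : A *ᵥ c = g := by
      rw [hc, Matrix.mulVec_mulVec, hAAinv, Matrix.one_mulVec]
    have h1 : A * vecMulVec c c = vecMulVec g c := by
      rw [aux_mul_vecMulVec, hAc]
    have h2 : vecMulVec g g * A⁻¹ = vecMulVec g c := by
      rw [aux_vecMulVec_mul, hvm]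
    have h3 : vecMulVec g g * vecMulVec c c = s • vecMulVec g c := by
      rw [aux_mul_vecMulVec, aux_vecMulVec_mulVec]
      have hgc : g ⬝ᵥ c = s := hs.symm
      ext i j
      simp [vecMulVec_apply, hgc, mul_assoc, mul_comm, mul_left_comm]
    rw [hCdef, Matrix.mul_sub, Matrix.add_mul, Matrix.add_mul, hAAinv, h2,
      Matrix.mul_smul, Matrix.mul_smul, h1, h3, smul_smul, ← add_smul, hcoef, one_smul]
    exact add_sub_cancel_right _ _
  have hBinv : (A + vecMulVec g g)⁻¹ = C :=
    Matrix.inv_eq_right_inv hBC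
  -- compute the quadratic form
  have hquad : g ⬝ᵥ ((A + vecMulVec g g)⁻¹ *ᵥ g) = s / (1 + s) := by
    rw [hBinv, hCdef, Matrix.sub_mulVec, Matrix.smul_mulVec,
      aux_vecMulVec_mulVec]
    have hcg : c ⬝ᵥ g = s := (dotProduct_comm c g).trans hs.symm
    rw [hcg]
    rw [dotProduct_sub, dotProduct_smul, dotProduct_smul]
    simp only [smul_eq_mul, ← hc, ← hs]
    field_simp
    ring
  rw [hquad, hdet, Real.log_mul hA.det_pos.ne' h1s.ne']
  have hlog : 1 - (1 + s)⁻¹ ≤ Real.log (1 + s) := by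
    have h := Real.log_le_sub_one_of_pos (x := (1 + s)⁻¹) (by positivity)
    rw [Real.log_inv] at h
    linarith
  have : s / (1 + s) = 1 - (1 + s)⁻¹ := by field_simp; ring
  rw [this]
  linarith
end

section
/- Let c*, ĉ ∈ ℝⁿ with ‖c*‖₂ = ‖ĉ‖₂ = 1 and angle θ(c*, ĉ) < π/2 between them. Let X ⊆ (1/2)·Bⁿ (the Euclidean ball of radius 1/2) be nonempty compact, x ∈ argmax_{y ∈ X} ⟨c*, y⟩, and x̂ ∈ argmax_{y ∈ X} ⟨ĉ, y⟩. Then ⟨c*, x − x̂⟩ ≤ sin θ(c*, ĉ). -/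
open scoped RealInnerProductSpace

/-- Lemma 1 of Besbes et al.: for unit vectors `c*`, `ĉ` at angle `θ(c*, ĉ) < π/2`,
and a nonempty compact `X ⊆ (1/2)·Bⁿ`, optimal actions `x` for `c*` and `x̂` for `ĉ`
satisfy `⟪c*, x − x̂⟫ ≤ sin θ(c*, ĉ)`. -/
theorem regret_le_sin_angle {n : ℕ} (cstar chat : EuclideanSpace ℝ (Fin n))
    (hcstar : ‖cstar‖ = 1) (hchat : ‖chat‖ = 1)
    (hangle : Real.arccos ⟪cstar, chat⟫ < Real.pi / 2)
    (X : Set (EuclideanSpace ℝ (Fin n))) (hne : X.Nonempty) (hcomp : IsCompact X)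
    (hball : X ⊆ Metric.closedBall 0 (1 / 2))
    (x xhat : EuclideanSpace ℝ (Fin n)) (hx : x ∈ X) (hxhat : xhat ∈ X)
    (hoptx : ∀ y ∈ X, ⟪cstar, y⟫ ≤ ⟪cstar, x⟫)
    (hoptxhat : ∀ y ∈ X, ⟪chat, y⟫ ≤ ⟪chat, xhat⟫) :
    ⟪cstar, x - xhat⟫ ≤ Real.sin (Real.arccos ⟪cstar, chat⟫) := by
  set t : ℝ := ⟪cstar, chat⟫ with ht
  have habs : |t| ≤ 1 := by
    have := abs_real_inner_le_norm cstar chat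
    rwa [hcstar, hchat, one_mul] at this
  have ht1 : t ≤ 1 := (abs_le.mp habs).2
  have htm1 : -1 ≤ t := (abs_le.mp habs).1
  have htpos : 0 < t := by
    have h1 : 0 ≤ Real.arccos t := Real.arccos_nonneg t
    have h2 : t = Real.cos (Real.arccos t) := (Real.cos_arccos htm1 ht1).symm
    rw [h2]
    apply Real.cos_pos_of_mem_Ioo
    constructor <;> [linarith [Real.pi_pos]; exact hangle]
  set w : EuclideanSpace ℝ (Fin n) := cstar - t • chat with hw
  have hwchat : ⟪chat, w⟫ = 0 := by
    rw [hw, inner_sub_right, real_inner_smul_right, real_inner_self_eq_norm_sq, hchat,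
      real_inner_comm]
    ring
  have hwnormsq : ‖w‖ ^ 2 = 1 - t ^ 2 := by
    have h := real_inner_comm chat cstar
    rw [← real_inner_self_eq_norm_sq, hw]
    simp only [inner_sub_left, inner_sub_right, real_inner_smul_left, real_inner_smul_right,
      real_inner_self_eq_norm_sq, hcstar, hchat, norm_smul, Real.norm_eq_abs, mul_one,
      ← h, ← ht, sq_abs]
    ring
  have hwnorm : ‖w‖ = Real.sqrt (1 - t ^ 2) := by
    rw [← hwnormsq, Real.sqrt_sq (norm_nonneg _)]
  have hxx : ‖x - xhat‖ ≤ 1 := by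
    have h1 : ‖x‖ ≤ 1 / 2 := by simpa [mem_closedBall_zero_iff] using hball hx
    have h2 : ‖xhat‖ ≤ 1 / 2 := by simpa [mem_closedBall_zero_iff] using hball hxhat
    calc ‖x - xhat‖ ≤ ‖x‖ + ‖xhat‖ := norm_sub_le _ _
      _ ≤ 1 := by linarith
  have hdecomp : ⟪cstar, x - xhat⟫ = t * ⟪chat, x - xhat⟫ + ⟪w, x - xhat⟫ := by
    rw [hw, inner_sub_left, real_inner_smul_left]
    ring
  have hchatle : ⟪chat, x - xhat⟫ ≤ 0 := by
    rw [inner_sub_right]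
    have := hoptxhat x hx
    linarith
  have hcs : ⟪w, x - xhat⟫ ≤ Real.sqrt (1 - t ^ 2) := by
    calc ⟪w, x - xhat⟫ ≤ ‖w‖ * ‖x - xhat‖ := real_inner_le_norm _ _
      _ ≤ ‖w‖ * 1 := by
          apply mul_le_mul_of_nonneg_left hxx (norm_nonneg _)
      _ = Real.sqrt (1 - t ^ 2) := by rw [mul_one, hwnorm]
  rw [Real.sin_arccos]
  calc ⟪cstar, x - xhat⟫ = t * ⟪chat, x - xhat⟫ + ⟪w, x - xhat⟫ := hdecomp
    _ ≤ 0 + Real.sqrt (1 - t ^ 2) := by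
        have : t * ⟪chat, x - xhat⟫ ≤ 0 := mul_nonpos_of_nonneg_of_nonpos htpos.le hchatle
        linarith
    _ = Real.sqrt (1 - t ^ 2) := by ring
end
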